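/- arXiv:2006.04769 — 2 statements merged into one kernel-verified Lean document; each statement's English description precedes it below -/
import Mathlib

section
/- If the columns of X̲ are pairwise orthogonal (features uncorrelated), then for every λ ∈ [0,1), the contribution-covariance-regularized solution ((1−λ)X̲ᵀX̲ + nλV)⁻¹X̲ᵀy̲ equals the OLS solution (X̲ᵀX̲)⁻¹X̲ᵀy̲. -/
open Matrix

/-- If the columns of `X̲` are pairwise orthogonal (features uncorrelated),
then for every `λ ∈ [0,1)` the contribution-covariance-regularized solution
`((1−λ)X̲ᵀX̲ + nλV)⁻¹X̲ᵀy̲` equals the OLS solution `(X̲ᵀX̲)⁻¹X̲ᵀy̲`. -/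
theorem ccp_solution_eq_ols_of_orthogonal {n k : ℕ}
    (Xc : Matrix (Fin n) (Fin k) ℝ) (yc : Fin n → ℝ)
    (hcols : ∀ j, (fun i => Xc i j) ≠ 0)
    (horth : ∀ j j' : Fin k, j ≠ j' → ∑ i, Xc i j * Xc i j' = 0)
    (V : Matrix (Fin k) (Fin k) ℝ)
    (hV : (n : ℝ) • V = Matrix.diagonal fun j => (Xcᵀ * Xc) j j) :
    ∀ l : ℝ, 0 ≤ l → l < 1 →
      ((1 - l) • (Xcᵀ * Xc) + ((n : ℝ) * l) • V)⁻¹.mulVec (Xcᵀ.mulVec yc) =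
        (Xcᵀ * Xc)⁻¹.mulVec (Xcᵀ.mulVec yc) := by
  intro l _ _
  have hdiag : Xcᵀ * Xc = Matrix.diagonal fun j => (Xcᵀ * Xc) j j := by
    ext i j
    by_cases h : i = j
    · subst h; simp [Matrix.diagonal]
    · simp [Matrix.diagonal, h, Matrix.mul_apply, Matrix.transpose_apply, horth i j h]
  have key : (1 - l) • (Xcᵀ * Xc) + ((n : ℝ) * l) • V = Xcᵀ * Xc := by
    have : ((n : ℝ) * l) • V = l • ((n : ℝ) • V) := by
      rw [smul_smul, mul_comm]
    rw [this, hV, ← hdiag, ← add_smul]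
    ring_nf
    simp
  rw [key]
end

section
/- The ridge-type solution β̂ = (XᵀX + c·D)⁻¹Xᵀy with D positive definite diagonal and c > 0 is the unique minimizer of |y − Xβ|² + c·βᵀDβ; with Dⱼⱼ = vⱼ + μⱼ² and c = λ/(1−λ) this is the Modified L2 penalized solution corresponding to inverted input dropout. -/
open Matrix Finset

/-- The ridge-type solution `β̂ = (XᵀX + c·D)⁻¹Xᵀy` with `D` positive
definite diagonal and `c > 0` is the unique minimizer of `|y − Xβ|² + c·βᵀDβ`.
With `Dⱼⱼ = vⱼ + μⱼ²` and `c = λ/(1−λ)` this is the Modified L2 penalized solution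
corresponding to inverted input dropout. -/
theorem ridge_unique_minimizer {n k : ℕ} (X : Matrix (Fin n) (Fin k) ℝ)
    (y : Fin n → ℝ) (d : Fin k → ℝ) (hd : ∀ j, 0 < d j) (c : ℝ) (hc : 0 < c)
    (J : (Fin k → ℝ) → ℝ)
    (hJ : J = fun β => (∑ i, (y i - X.mulVec β i) ^ 2) + c * ∑ j, d j * (β j) ^ 2)
    (βhat : Fin k → ℝ)
    (hβhat : βhat = (Xᵀ * X + c • Matrix.diagonal d)⁻¹.mulVec (Xᵀ.mulVec y)) :
    ∀ β : Fin k → ℝ, J βhat ≤ J β ∧ (J β = J βhat → β = βhat) := by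
  set A : Matrix (Fin k) (Fin k) ℝ := Xᵀ * X + c • Matrix.diagonal d with hA_def
  set t : Fin k → ℝ := Xᵀ *ᵥ y with ht_def
  -- A is positive definite
  have hA : A.PosDef := by
    have h1 : (Xᵀ * X).PosSemidef := by
      simpa using Matrix.posSemidef_conjTranspose_mul_self X
    have h2 : (c • Matrix.diagonal d).PosDef := by
      rw [← Matrix.diagonal_smul]
      exact Matrix.posDef_diagonal_iff.mpr fun j => smul_pos hc (hd j)
    exact Matrix.PosDef.posSemidef_add h1 h2
  -- the normal equations
  have hsolve : A *ᵥ βhat = t := by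
    rw [hβhat, Matrix.mulVec_mulVec, Matrix.mul_nonsing_inv _ (isUnit_iff_ne_zero.mpr hA.det_pos.ne'),
      Matrix.one_mulVec]
  -- J in quadratic form
  have hJq : ∀ β : Fin k → ℝ, J β = β ⬝ᵥ A *ᵥ β - 2 * (β ⬝ᵥ t) + y ⬝ᵥ y := by
    intro β
    have h1 : (∑ i, (y i - X.mulVec β i) ^ 2)
        = (X *ᵥ β) ⬝ᵥ (X *ᵥ β) - 2 * ((X *ᵥ β) ⬝ᵥ y) + y ⬝ᵥ y := by
      simp [dotProduct, Finset.mul_sum, ← Finset.sum_add_distrib, ← Finset.sum_sub_distrib]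
      exact Finset.sum_congr rfl fun i _ => by ring
    have h2 : (X *ᵥ β) ⬝ᵥ (X *ᵥ β) = β ⬝ᵥ (Xᵀ * X) *ᵥ β := by
      rw [← Matrix.mulVec_mulVec, Matrix.dotProduct_mulVec β Xᵀ, Matrix.vecMul_transpose]
    have h3 : (X *ᵥ β) ⬝ᵥ y = β ⬝ᵥ t := by
      rw [ht_def, Matrix.dotProduct_mulVec β Xᵀ, Matrix.vecMul_transpose, dotProduct_comm]
    have h4 : c * ∑ j, d j * (β j) ^ 2 = β ⬝ᵥ (c • Matrix.diagonal d) *ᵥ β := by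
      simp [dotProduct, Matrix.mulVec_diagonal, Finset.mul_sum, ← Matrix.diagonal_smul]
      exact Finset.sum_congr rfl fun j _ => by ring
    rw [hJ]
    simp only [hA_def, Matrix.add_mulVec, dotProduct_add]
    rw [h1, h2, h3, h4]
    ring
  -- symmetry of A
  have hsym : ∀ u v : Fin k → ℝ, u ⬝ᵥ A *ᵥ v = v ⬝ᵥ A *ᵥ u := by
    intro u v
    have hAsym : Aᵀ = A := by
      have := hA.isHermitian.eq
      simpa using this
    rw [Matrix.dotProduct_mulVec u A, ← Matrix.mulVec_transpose, hAsym, dotProduct_comm]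
  -- the key difference identity
  have hdiff : ∀ β : Fin k → ℝ, J β - J βhat = (β - βhat) ⬝ᵥ A *ᵥ (β - βhat) := by
    intro β
    have e : (β - βhat) ⬝ᵥ A *ᵥ (β - βhat)
        = β ⬝ᵥ A *ᵥ β - β ⬝ᵥ A *ᵥ βhat - βhat ⬝ᵥ A *ᵥ β + βhat ⬝ᵥ A *ᵥ βhat := by
      rw [Matrix.mulVec_sub, sub_dotProduct, dotProduct_sub,
        dotProduct_sub]
      ring
    rw [e, hJq β, hJq βhat, hsym βhat β, hsolve]
    ring
  intro β
  constructor
  · have h0 : 0 ≤ (β - βhat) ⬝ᵥ A *ᵥ (β - βhat) := by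
      simpa using hA.posSemidef.dotProduct_mulVec_nonneg (β - βhat)
    linarith [hdiff β]
  · intro heq
    by_contra hne
    have hx : β - βhat ≠ 0 := sub_ne_zero_of_ne hne
    have hpos := hA.dotProduct_mulVec_pos hx
    simp only [star_trivial] at hpos
    have h := hdiff β
    rw [heq] at h
    simp only [sub_self] at h
    linarith
end
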